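/- Let F be a field, V a vector space over F, n ≥ 1, and D an n-determinant on V. Let W = F × V, let p_1 : F × V → F and p_2 : F × V → V be the projections onto the first and second coordinates, and define D' : W^{n+1} → F by D'(w_1,…,w_{n+1}) = Σ_{i=1}^{n+1} (−1)^{i−1} · p_1(w_i) · D(p_2(w_1),…, p_2(w_i) omitted, …, p_2(w_{n+1})), where in the i-th summand the entry p_2(w_i) is dropped from the (n+1)-tuple. Then D' is an (n+1)-determinant on W. -/

import Mathlib

/-- The "main equation" for a function `D : V^n → F`:
for every `(n+1)`-tuple `v₁, …, vₙ, b`,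
`D(v₁,…,vₙ) • b = ∑ₖ D(v₁,…,b,…,vₙ) • vₖ` (the `k`-th summand replaces `vₖ` by `b`). -/
def MainEq (F : Type*) {V : Type*} [Field F] [AddCommGroup V] [Module F V]
    (n : ℕ) (D : (Fin n → V) → F) : Prop :=
  ∀ (v : Fin n → V) (b : V),
    D v • b = ∑ k : Fin n, D (Function.update v k b) • v k

/-- An `n`-determinant on `V`: a nonzero function `D : V^n → F` satisfying the main
equation, where moreover the dimension of `V` over `F` equals `n`. -/
def IsDeterminant (F V : Type*) [Field F] [AddCommGroup V] [Module F V]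
    (n : ℕ) (D : (Fin n → V) → F) : Prop :=
  D ≠ 0 ∧ MainEq F n D ∧ Module.finrank F V = n

/-- `D : V^n → F` is multilinear: additive and homogeneous of degree 1
in each variable separately. -/
def IsMultilinearFn (F : Type*) {V : Type*} [Field F] [AddCommGroup V] [Module F V]
    (n : ℕ) (D : (Fin n → V) → F) : Prop :=
  (∀ (v : Fin n → V) (k : Fin n) (u w : V),
      D (Function.update v k (u + w))
        = D (Function.update v k u) + D (Function.update v k w)) ∧
  (∀ (v : Fin n → V) (k : Fin n) (c : F) (u : V),
      D (Function.update v k (c • u)) = c * D (Function.update v k u))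

/-- `D : V^n → F` is antisymmetric: interchanging any two arguments changes the sign. -/
def IsAntisymmetricFn (F : Type*) {V : Type*} [Field F] [AddCommGroup V] [Module F V]
    (n : ℕ) (D : (Fin n → V) → F) : Prop :=
  ∀ (v : Fin n → V) (i j : Fin n), i ≠ j → D (v ∘ Equiv.swap i j) = - D v

section Aux
variable {F V : Type*} [Field F] [AddCommGroup V] [Module F V]

lemma aux_span_top {n : ℕ} {D : (Fin n → V) → F}
    (hmain : MainEq F n D) {v : Fin n → V} (hv : D v ≠ 0) :
    ⊤ ≤ Submodule.span F (Set.range v) := by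
  intro b _
  have h := hmain v b
  have hb : b = (D v)⁻¹ • (D v • b) := by rw [smul_smul, inv_mul_cancel₀ hv, one_smul]
  rw [hb, h]
  exact Submodule.smul_mem _ _ (Submodule.sum_mem _ fun k _ =>
    Submodule.smul_mem _ _ (Submodule.subset_span ⟨k, rfl⟩))

lemma aux_slot_linear {n : ℕ} {D : (Fin n → V) → F}
    (hmain : MainEq F n D) (hfin : Module.finrank F V = n)
    (v : Fin n → V) (k : Fin n) :
    ∃ φ : V →ₗ[F] F, ∀ u, D (Function.update v k u) = φ u := by
  by_cases hz : ∀ u, D (Function.update v k u) = 0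
  · exact ⟨0, fun u => by simp [hz u]⟩
  push_neg at hz
  obtain ⟨w, hw⟩ := hz
  set v' := Function.update v k w with hv'
  have hspan : ⊤ ≤ Submodule.span F (Set.range v') := aux_span_top hmain hw
  have hcard : Fintype.card (Fin n) = Module.finrank F V := by simp [hfin]
  let e : Module.Basis (Fin n) F V := basisOfTopLeSpanOfCardEqFinrank v' hspan hcard
  have he : ⇑e = v' := coe_basisOfTopLeSpanOfCardEqFinrank v' hspan hcard
  refine ⟨D v' • e.coord k, fun u => ?_⟩
  have h2 : e.coord k (D v' • u) = e.coord k (∑ j, D (Function.update v' j u) • v' j) := by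
    rw [hmain v' u]
  rw [map_smul, map_sum] at h2
  simp only [map_smul] at h2
  have hcoord : ∀ j, e.coord k (v' j) = if j = k then 1 else 0 := by
    intro j
    have : v' j = e j := by rw [he]
    rw [this, Module.Basis.coord_apply, Module.Basis.repr_self, Finsupp.single_apply]
  have hsum : ∑ j, D (Function.update v' j u) • e.coord k (v' j)
      = D (Function.update v k u) := by
    rw [Finset.sum_eq_single k]
    · rw [hcoord k, if_pos rfl, smul_eq_mul, mul_one, hv', Function.update_idem]
    · intro j _ hj; rw [hcoord j, if_neg hj, smul_zero]
    · simp
  rw [hsum] at h2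
  simpa [smul_eq_mul] using h2.symm

lemma aux_eq_mul_basis_det {n : ℕ} {D : (Fin n → V) → F}
    (hmain : MainEq F n D) (hfin : Module.finrank F V = n)
    (b : Module.Basis (Fin n) F V) :
    ∀ v, D v = D ⇑b * b.det v := by
  have hzero : ∀ (v : Fin n → V) (i j : Fin n), v i = v j → i ≠ j → D v = 0 := by
    intro v i j hij hne
    by_contra hv
    have hspan := aux_span_top hmain hv
    have hcard : Fintype.card (Fin n) = Module.finrank F V := by simp [hfin]
    have hli := linearIndependent_of_top_le_span_of_card_eq_finrank hspan hcard
    exact hne (hli.injective hij)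
  let Dml : MultilinearMap F (fun _ : Fin n => V) F :=
    { toFun := D
      map_update_add' := by
        intro dec v k x y
        have hdec : dec = instDecidableEqFin n := Subsingleton.elim _ _
        subst hdec
        obtain ⟨φ, hφ⟩ := aux_slot_linear hmain hfin v k
        rw [hφ, hφ, hφ, map_add]
      map_update_smul' := by
        intro dec v k c x
        have hdec : dec = instDecidableEqFin n := Subsingleton.elim _ _
        subst hdec
        obtain ⟨φ, hφ⟩ := aux_slot_linear hmain hfin v k
        rw [hφ, hφ, map_smul] }
  let Da : V [⋀^Fin n]→ₗ[F] F :=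
    { Dml with map_eq_zero_of_eq' := fun v i j hij hne => show D v = 0 from hzero v i j hij hne }
  intro v
  have h := Da.eq_smul_basis_det b
  have h2 : Da v = (Da ⇑b • b.det) v := by rw [← h]
  simpa [Da, Dml] using h2

lemma aux_mainEq_basis_det {m : ℕ} {W : Type*} [AddCommGroup W] [Module F W]
    (e : Module.Basis (Fin m) F W) : MainEq F m (fun w => e.det w) := by
  intro w b
  apply e.equivFun.injective
  rw [map_smul, map_sum]
  simp only [map_smul]
  set A := e.toMatrix w with hA
  have hcol : ∀ k, e.det (Function.update w k b) = Matrix.cramer A (e.equivFun b) k := by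
    intro k
    rw [Module.Basis.det_apply, Module.Basis.toMatrix_update, Matrix.cramer_apply]
    congr 1
    try rw [Module.Basis.equivFun_apply]
  have key := congrFun (Matrix.mulVec_cramer A (e.equivFun b))
  funext i
  have hAik : ∀ k, e.equivFun (w k) i = A i k := by
    intro k
    rw [Module.Basis.equivFun_apply, hA, Module.Basis.toMatrix_apply]
  calc (e.det w • e.equivFun b) i
      = A.det * e.equivFun b i := by rw [Pi.smul_apply, smul_eq_mul, Module.Basis.det_apply]
    _ = A.mulVec (Matrix.cramer A (e.equivFun b)) i := by rw [key i]; simp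
    _ = ∑ k, A i k * Matrix.cramer A (e.equivFun b) k := by
        simp [Matrix.mulVec, dotProduct]
    _ = ∑ k, e.det (Function.update w k b) * e.equivFun (w k) i := by
        refine Finset.sum_congr rfl fun k _ => ?_
        rw [hcol k, hAik k, mul_comm]
    _ = (∑ k, e.det (Function.update w k b) • e.equivFun (w k)) i := by
        simp
end Aux

theorem stmt_12 (F V : Type*) [Field F] [AddCommGroup V] [Module F V]
    (n : ℕ) (hn : 1 ≤ n) (D : (Fin n → V) → F)
    (hD : IsDeterminant F V n D) :
    IsDeterminant F (F × V) (n + 1)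
      (fun w : Fin (n + 1) → F × V =>
        ∑ i : Fin (n + 1),
          (-1 : F) ^ (i : ℕ) * (w i).1 * D (fun j => (w (i.succAbove j)).2)) := by
  obtain ⟨hne, hmain, hfin⟩ := hD
  have hfd : Module.Finite F V := Module.finite_of_finrank_pos (by omega)
  let b : Module.Basis (Fin n) F V := Module.finBasisOfFinrankEq F V hfin
  -- linear equivalence (F × V) ≃ (Fin (n+1) → F)
  let L : (F × V) ≃ₗ[F] (Fin (n + 1) → F) :=
    { toFun := fun x => Fin.cons x.1 (b.equivFun x.2)
      invFun := fun f => (f 0, b.equivFun.symm fun j => f j.succ)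
      map_add' := by
        intro x y
        funext i
        refine Fin.cases ?_ (fun j => ?_) i <;> simp
      map_smul' := by
        intro c x
        funext i
        refine Fin.cases ?_ (fun j => ?_) i <;> simp
      left_inv := by
        intro x
        simp only [Fin.cons_zero, Fin.cons_succ, LinearEquiv.symm_apply_apply]
      right_inv := by
        intro f
        funext i
        refine Fin.cases ?_ (fun j => ?_) i <;>
          simp only [Fin.cons_zero, Fin.cons_succ, LinearEquiv.apply_symm_apply] }
  let e : Module.Basis (Fin (n + 1)) F (F × V) := Module.Basis.ofEquivFun L
  have hA : ∀ (w : Fin (n + 1) → F × V) (i k : Fin (n + 1)),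
      e.toMatrix w i k = (Fin.cons ((w k).1) (b.equivFun (w k).2) : Fin (n+1) → F) i := by
    intro w i k
    rw [Module.Basis.toMatrix_apply]
    exact Module.Basis.ofEquivFun_repr_apply L (w k) i
  have hdet : ∀ w : Fin (n + 1) → F × V,
      e.det w = ∑ i : Fin (n + 1),
        (-1 : F) ^ (i : ℕ) * (w i).1 * b.det (fun j => (w (i.succAbove j)).2) := by
    intro w
    rw [Module.Basis.det_apply, Matrix.det_succ_row_zero]
    refine Finset.sum_congr rfl fun i _ => ?_
    have h0 : (e.toMatrix w) 0 i = (w i).1 := by rw [hA w 0 i, Fin.cons_zero]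
    have hsub : (e.toMatrix w).submatrix Fin.succ i.succAbove
        = b.toMatrix (fun j => (w (i.succAbove j)).2) := by
      ext l k
      rw [Matrix.submatrix_apply, hA, Fin.cons_succ, Module.Basis.toMatrix_apply,
        Module.Basis.equivFun_apply]
    rw [h0, hsub, ← Module.Basis.det_apply]
  set c := D ⇑b with hc
  have hDv : ∀ v, D v = c * b.det v := aux_eq_mul_basis_det hmain hfin b
  have hcne : c ≠ 0 := by
    intro h0
    apply hne
    funext v
    rw [hDv v, h0, zero_mul]; rfl
  have hD' : ∀ w : Fin (n + 1) → F × V,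
      (∑ i : Fin (n + 1),
        (-1 : F) ^ (i : ℕ) * (w i).1 * D (fun j => (w (i.succAbove j)).2))
      = c * e.det w := by
    intro w
    rw [hdet w, Finset.mul_sum]
    refine Finset.sum_congr rfl fun i _ => ?_
    rw [hDv]
    ring
  refine ⟨?_, ?_, ?_⟩
  · intro h0
    have h1 := congrFun h0 ⇑e
    simp only [Pi.zero_apply] at h1
    rw [hD' ⇑e, Module.Basis.det_self, mul_one] at h1
    exact hcne h1
  · intro w bb
    simp only [hD']
    have hm := aux_mainEq_basis_det e w bb
    simp only at hm
    rw [mul_smul, hm, Finset.smul_sum]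
    exact Finset.sum_congr rfl fun k _ => (mul_smul _ _ _).symm
  · have : Module.finrank F (F × V) = Module.finrank F F + Module.finrank F V :=
      Module.finrank_prod
    rw [this, hfin, Module.finrank_self]
    omega
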